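/- Let H be a real Hilbert space, let (v_n)_{n=0}^∞ be a bounded sequence in H, let {T_i}_{i=1}^m be a finite family of strongly nonexpansive operators on H such that the origin 0 is a common fixed point of all T_i, and let v ∈ H. Suppose that v_n converges weakly to v and that for each i = 1,…,m, ‖T_{i−1}∘⋯∘T_1 v_n‖ − ‖T_i∘⋯∘T_1 v_n‖ → 0 (where the empty composition is the identity). Then the sequence (T_m∘⋯∘T_1 v_n)_{n=0}^∞ converges weakly to v, and v is a common fixed point of the family {T_i}_{i=1}^m. -/

import Mathlib

open Filter Topology RealInnerProductSpace

variable {H : Type*} [NormedAddCommGroup H] [InnerProductSpace ℝ H] [CompleteSpace H]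

/-- Weak convergence in a Hilbert space: `x n ⇀ p`. -/
def WeakConvergesTo (x : ℕ → H) (p : H) : Prop :=
  ∀ y : H, Tendsto (fun n => ⟪x n, y⟫) atTop (𝓝 ⟪p, y⟫)

/-- `compSeq n g = g (n-1) ∘ ⋯ ∘ g 0` (the identity when `n = 0`). -/
def compSeq {α : Type*} : ℕ → (ℕ → α → α) → (α → α)
  | 0, _ => id
  | n + 1, g => g n ∘ compSeq n g

/-- `P` is the metric projection onto `C`. -/
def IsProjOn (C : Set H) (P : H → H) : Prop :=
  ∀ x, P x ∈ C ∧ ∀ y ∈ C, ‖x - P x‖ ≤ ‖x - y‖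

/-- Nonexpansive operator. -/
def Nonexpansive (T : H → H) : Prop := ∀ x y, ‖T x - T y‖ ≤ ‖x - y‖

/-- Condition (S). -/
def CondS (T : H → H) : Prop :=
  ∀ x y : ℕ → H, (∃ c, ∀ n, ‖x n - y n‖ ≤ c) →
    Tendsto (fun n => ‖x n - y n‖ - ‖T (x n) - T (y n)‖) atTop (𝓝 0) →
    Tendsto (fun n => x n - y n - (T (x n) - T (y n))) atTop (𝓝 (0 : H))

/-- Strongly nonexpansive operator. -/
def StronglyNonexpansive (T : H → H) : Prop := Nonexpansive T ∧ CondS T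

/-- Firmly nonexpansive operator. -/
def FirmlyNonexpansive (T : H → H) : Prop :=
  ∀ x y, ‖T x - T y‖ ^ 2 ≤ ⟪T x - T y, x - y⟫

/-- Averaged operator. -/
def Averaged (T : H → H) : Prop :=
  ∃ lam ∈ Set.Ioo (0 : ℝ) 1, ∃ U : H → H, Nonexpansive U ∧
    T = fun x => (1 - lam) • x + lam • U x

/-- The unrestricted `r`-set Douglas–Rachford operators `S n` associated with projections
`proj i` onto the sets `C i`, indices chosen by `f`: `S n = 2⁻¹ (Id + R_{C_{f((r-1)n+r-1)}} ∘ ⋯ ∘ R_{C_{f((r-1)n)}})`. -/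
noncomputable def drS (proj : ℕ → H → H) (r : ℕ) (f : ℕ → ℕ) (n : ℕ) : H → H :=
  fun x => (2⁻¹ : ℝ) • (x + compSeq r (fun j y => (2 : ℝ) • proj (f ((r - 1) * n + j)) y - y) x)


lemma weak_of_sub_tendsto {x y : ℕ → H} {w : H}
    (hx : WeakConvergesTo x w)
    (h : Tendsto (fun n => y n - x n) atTop (𝓝 (0 : H))) :
    WeakConvergesTo y w := by
  intro z
  have h1 : Tendsto (fun n => ⟪y n - x n, z⟫) atTop (𝓝 (0 : ℝ)) := by
    have := Tendsto.inner (𝕜 := ℝ) h (tendsto_const_nhds (x := z))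
    simpa using this
  have h2 := (hx z).add h1
  simpa [inner_sub_left] using h2

lemma demiclosed {T : H → H} (hT : Nonexpansive T) {x : ℕ → H} {w : H}
    (c : ℝ) (hb : ∀ n, ‖x n - w‖ ≤ c)
    (hx : WeakConvergesTo x w)
    (hd : Tendsto (fun n => x n - T (x n)) atTop (𝓝 (0 : H))) : T w = w := by
  set q := w - T w with hq
  have hc0 : (0 : ℝ) ≤ c := (norm_nonneg _).trans (hb 0)
  have hε : Tendsto (fun n => ‖x n - T (x n)‖) atTop (𝓝 0) := by
    simpa using hd.norm
  have hinner : Tendsto (fun n => ⟪x n - w, q⟫) atTop (𝓝 (0 : ℝ)) := by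
    have := (hx q).sub (tendsto_const_nhds (x := (⟪w, q⟫ : ℝ)))
    simpa [inner_sub_left] using this
  have hkey : ∀ n, ‖q‖ ^ 2 ≤
      ‖x n - T (x n)‖ ^ 2 + 2 * c * ‖x n - T (x n)‖ - 2 * ⟪x n - w, q⟫ := by
    intro n
    have h1 : ‖x n - T w‖ ≤ ‖x n - T (x n)‖ + ‖x n - w‖ := by
      calc ‖x n - T w‖ = ‖(x n - T (x n)) + (T (x n) - T w)‖ := by rw [sub_add_sub_cancel]
        _ ≤ ‖x n - T (x n)‖ + ‖T (x n) - T w‖ := norm_add_le _ _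
        _ ≤ ‖x n - T (x n)‖ + ‖x n - w‖ := by
            have := hT (x n) w
            linarith
    have h2 : ‖x n - T w‖ ^ 2 = ‖x n - w‖ ^ 2 + 2 * ⟪x n - w, q⟫ + ‖q‖ ^ 2 := by
      have h3 : x n - T w = (x n - w) + q := by rw [hq]; abel
      rw [h3]
      exact norm_add_sq_real _ _
    have h4 : ‖x n - T w‖ ^ 2 ≤ (‖x n - T (x n)‖ + ‖x n - w‖) ^ 2 :=
      pow_le_pow_left₀ (norm_nonneg _) h1 2
    nlinarith [hb n, norm_nonneg (x n - T (x n)), norm_nonneg (x n - w)]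
  have hlim : Tendsto (fun n => ‖x n - T (x n)‖ ^ 2 + 2 * c * ‖x n - T (x n)‖
      - 2 * ⟪x n - w, q⟫) atTop (𝓝 0) := by
    have := ((hε.pow 2).add ((tendsto_const_nhds (x := (2*c : ℝ))).mul hε)).sub
      ((tendsto_const_nhds (x := (2 : ℝ))).mul hinner)
    simpa using this
  have hq2 : ‖q‖ ^ 2 ≤ 0 := ge_of_tendsto' hlim hkey
  have : q = 0 := by
    have := sq_nonneg ‖q‖
    have h5 : ‖q‖ ^ 2 = 0 := le_antisymm hq2 this
    simpa using pow_eq_zero_iff (n := 2) (by norm_num) |>.mp h5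
  have := sub_eq_zero.mp this
  exact this.symm


/-- Lemma 4.4: weak convergence of `T_m ∘ ⋯ ∘ T_1 v_n` to a common fixed
point. -/
theorem stmt10
    (m : ℕ) (v : ℕ → H) (hbdd : ∃ c : ℝ, ∀ n, ‖v n‖ ≤ c)
    (T : ℕ → H → H)
    (hT : ∀ i ∈ Set.Icc 1 m, StronglyNonexpansive (T i))
    (hT0 : ∀ i ∈ Set.Icc 1 m, T i 0 = 0)
    (w : H) (hw : WeakConvergesTo v w)
    (hnorm : ∀ i ∈ Set.Icc 1 m,
      Tendsto (fun n => ‖compSeq (i - 1) (fun j => T (j + 1)) (v n)‖ -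
        ‖compSeq i (fun j => T (j + 1)) (v n)‖) atTop (𝓝 0)) :
    WeakConvergesTo (fun n => compSeq m (fun j => T (j + 1)) (v n)) w ∧
      ∀ i ∈ Set.Icc 1 m, T i w = w := by
  classical
  obtain ⟨c, hc⟩ := hbdd
  have hbound : ∀ i, i ≤ m → ∀ n, ‖compSeq i (fun j => T (j + 1)) (v n)‖ ≤ c := by
    intro i
    induction i with
    | zero => intro _ n; simpa [compSeq] using hc n
    | succ i ih =>
      intro hi n
      have hmem : i + 1 ∈ Set.Icc 1 m :=
        Set.mem_Icc.mpr ⟨Nat.succ_le_succ (Nat.zero_le i), hi⟩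
      have h1 : ‖T (i + 1) (compSeq i (fun j => T (j + 1)) (v n))‖ ≤
          ‖compSeq i (fun j => T (j + 1)) (v n)‖ := by
        have := (hT _ hmem).1 (compSeq i (fun j => T (j + 1)) (v n)) 0
        simpa [hT0 _ hmem] using this
      have h2 : compSeq (i + 1) (fun j => T (j + 1)) (v n)
          = T (i + 1) (compSeq i (fun j => T (j + 1)) (v n)) := rfl
      rw [h2]
      exact h1.trans (ih (Nat.le_of_succ_le hi) n)
  have hS : ∀ i, i + 1 ≤ m →
      Tendsto (fun n => compSeq i (fun j => T (j + 1)) (v n)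
        - T (i + 1) (compSeq i (fun j => T (j + 1)) (v n))) atTop (𝓝 (0 : H)) := by
    intro i hi
    have hmem : i + 1 ∈ Set.Icc 1 m :=
      Set.mem_Icc.mpr ⟨Nat.succ_le_succ (Nat.zero_le i), hi⟩
    have hn := hnorm (i + 1) hmem
    have hn' : Tendsto (fun n => ‖compSeq i (fun j => T (j + 1)) (v n) - 0‖ -
        ‖T (i + 1) (compSeq i (fun j => T (j + 1)) (v n)) - T (i + 1) 0‖)
        atTop (𝓝 0) := by
      have h2 : ∀ n, compSeq (i + 1) (fun j => T (j + 1)) (v n)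
          = T (i + 1) (compSeq i (fun j => T (j + 1)) (v n)) := fun n => rfl
      simp only [Nat.add_sub_cancel, h2] at hn
      simpa [hT0 _ hmem] using hn
    have := (hT _ hmem).2 (fun n => compSeq i (fun j => T (j + 1)) (v n)) (fun _ => 0)
      ⟨c, fun n => by simpa using hbound i (Nat.le_of_succ_le hi) n⟩ hn'
    simpa [hT0 _ hmem] using this
  have hB : ∀ i, i ≤ m →
      Tendsto (fun n => compSeq i (fun j => T (j + 1)) (v n) - v n) atTop (𝓝 (0 : H)) := by
    intro i
    induction i with
    | zero => intro _; simpa [compSeq] using (tendsto_const_nhds : Tendsto (fun _ : ℕ => (0:H)) atTop _)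
    | succ i ih =>
      intro hi
      have h1 := ih (Nat.le_of_succ_le hi)
      have h2 := hS i hi
      have h3 := h1.sub h2
      rw [sub_zero] at h3
      refine h3.congr fun n => ?_
      have h4 : compSeq (i + 1) (fun j => T (j + 1)) (v n)
          = T (i + 1) (compSeq i (fun j => T (j + 1)) (v n)) := rfl
      rw [h4]
      abel
  have hWi : ∀ i, i ≤ m →
      WeakConvergesTo (fun n => compSeq i (fun j => T (j + 1)) (v n)) w :=
    fun i hi => weak_of_sub_tendsto hw (hB i hi)
  refine ⟨hWi m le_rfl, ?_⟩
  intro i hi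
  obtain ⟨h1, h2⟩ := Set.mem_Icc.mp hi
  obtain ⟨j, rfl⟩ : ∃ j, i = j + 1 := ⟨i - 1, (Nat.succ_pred_eq_of_pos h1).symm⟩
  have hb : ∀ n, ‖compSeq j (fun k => T (k + 1)) (v n) - w‖ ≤ c + ‖w‖ := fun n =>
    (norm_sub_le _ _).trans (add_le_add_left (hbound j (Nat.le_of_succ_le h2) n) _)
  exact demiclosed (hT _ hi).1 (c + ‖w‖) hb (hWi j (Nat.le_of_succ_le h2)) (hS j h2)
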